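/- Minimum-distance property of the CSA code: let F be a field, L, B positive naturals, N = L + 4B, and let f_1, …, f_L, α_1, …, α_N ∈ F be N + L pairwise distinct elements. Define φ : F^(L+2B) → F^N by φ(x)_n = Σ_{ℓ=1}^L x_ℓ·(f_ℓ − α_n)⁻¹ + Σ_{k=1}^{2B} x_{L+k}·α_n^{k−1}. Then for every nonzero x ∈ F^(L+2B), the vector φ(x) has at most L + 2B − 1 zero coordinates; equivalently, its Hamming weight is at least 2B + 1. -/
import Mathlib

open Polynomial Finset


/-- The CSA (cross-subspace alignment) encoding map `φ : F^(L+2B) → F^N`, `N = L + 4B`: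
`φ(x)_n = Σ_{ℓ} x_ℓ (f_ℓ - α_n)⁻¹ + Σ_{k} x_{L+k} α_n^(k-1)`. -/
def csaEnc {F : Type*} [Field F] {L B : ℕ} (f : Fin L → F) (α : Fin (L + 4*B) → F)
    (x : Fin L ⊕ Fin (2*B) → F) (n : Fin (L + 4*B)) : F :=
  ∑ ℓ : Fin L, x (Sum.inl ℓ) * (f ℓ - α n)⁻¹ +
  ∑ k : Fin (2*B), x (Sum.inr k) * α n ^ (k : ℕ)

/-- **Minimum distance of the CSA code.**  If the `N + L` elements `f, α` are pairwise
distinct (`N = L + 4B`), then every nonzero `x ∈ F^(L+2B)` has codeword `csaEnc f α x` with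
at most `L + 2B - 1` zero coordinates, equivalently with Hamming weight at least `2B + 1`. -/
theorem csa_min_distance
    (F : Type*) [Field F] [DecidableEq F] (L B : ℕ) (hL : 0 < L) (hB : 0 < B)
    (f : Fin L → F) (α : Fin (L + 4*B) → F)
    (hdist : Function.Injective (Sum.elim f α))
    (x : Fin L ⊕ Fin (2*B) → F) (hx : x ≠ 0) :
    2*B + 1 ≤ (Finset.univ.filter fun n : Fin (L + 4*B) => csaEnc f α x n ≠ 0).card := by
  classical
  have hα : Function.Injective α := fun a b h => by
    have := hdist (a₁ := Sum.inr a) (a₂ := Sum.inr b) (by simpa using h)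
    simpa using this
  have hf : Function.Injective f := fun a b h => by
    have := hdist (a₁ := Sum.inl a) (a₂ := Sum.inl b) (by simpa using h)
    simpa using this
  have hfα : ∀ ℓ n, f ℓ ≠ α n := fun ℓ n h => by
    have := hdist (a₁ := Sum.inl ℓ) (a₂ := Sum.inr n) (by simpa using h)
    simp at this
  set Q : F[X] := ∏ ℓ : Fin L, (C (f ℓ) - X) with hQdef
  set g : F[X] := ∑ k : Fin (2*B), C (x (Sum.inr k)) * X ^ (k : ℕ) with hgdef
  set P : F[X] :=
    (∑ ℓ : Fin L, C (x (Sum.inl ℓ)) * ∏ j ∈ Finset.univ.erase ℓ, (C (f j) - X)) + g * Q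
    with hPdef
  have hlin : ∀ a : F, (C a - X : F[X]).natDegree = 1 := by
    intro a
    rw [show (C a - X : F[X]) = -(X - C a) by ring, natDegree_neg, natDegree_X_sub_C]
  have hlinne : ∀ a : F, (C a - X : F[X]) ≠ 0 := fun a => by
    intro h
    have := hlin a
    rw [h] at this
    simp at this
  have hQne : Q ≠ 0 := Finset.prod_ne_zero_iff.2 fun i _ => hlinne _
  -- evaluations of Q
  have hQeval : ∀ a : F, Q.eval a = ∏ ℓ : Fin L, (f ℓ - a) := by
    intro a; simp [hQdef, eval_prod]
  -- key identity
  have hkey : ∀ n, P.eval (α n) = csaEnc f α x n * Q.eval (α n) := by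
    intro n
    have hQne' : ∀ ℓ, f ℓ - α n ≠ 0 := fun ℓ => sub_ne_zero.2 (hfα ℓ n)
    rw [hPdef]
    simp only [eval_add, eval_finset_sum, eval_mul, eval_C, eval_prod, eval_sub, eval_X,
      eval_pow]
    rw [csaEnc, add_mul, Finset.sum_mul, Finset.sum_mul, hQeval]
    congr 1
    · apply Finset.sum_congr rfl
      intro ℓ _
      rw [mul_assoc]
      congr 1
      rw [← Finset.mul_prod_erase (univ : Finset (Fin L)) (fun j => f j - α n) (mem_univ ℓ),
        ← mul_assoc, inv_mul_cancel₀ (hQne' ℓ), one_mul]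
    · rw [hgdef]
      simp [eval_finset_sum, Finset.sum_mul]
  -- P ≠ 0
  have hPne : P ≠ 0 := by
    intro hP0
    have hxl : ∀ ℓ, x (Sum.inl ℓ) = 0 := by
      intro ℓ
      have he : P.eval (f ℓ) = 0 := by rw [hP0]; simp
      rw [hPdef] at he
      simp only [eval_add, eval_finset_sum, eval_mul, eval_C, eval_prod, eval_sub, eval_X] at he
      have hQ0 : (∏ j : Fin L, (f j - f ℓ)) = 0 :=
        Finset.prod_eq_zero (mem_univ ℓ) (by ring)
      have hsum : (∑ ℓ' : Fin L, x (Sum.inl ℓ') * ∏ j ∈ univ.erase ℓ', (f j - f ℓ)) =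
          x (Sum.inl ℓ) * ∏ j ∈ univ.erase ℓ, (f j - f ℓ) := by
        apply Finset.sum_eq_single
        · intro ℓ' _ hne
          have h0 : (∏ j ∈ univ.erase ℓ', (f j - f ℓ)) = 0 :=
            Finset.prod_eq_zero (Finset.mem_erase.2 ⟨Ne.symm hne, mem_univ ℓ⟩) (by ring)
          rw [h0, mul_zero]
        · intro h; exact absurd (mem_univ ℓ) h
      have hQev : Q.eval (f ℓ) = 0 := by rw [hQeval]; exact hQ0
      rw [hsum] at he
      have hpne : (∏ j ∈ univ.erase ℓ, (f j - f ℓ)) ≠ 0 := by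
        apply Finset.prod_ne_zero_iff.2
        intro j hj
        have : j ≠ ℓ := (Finset.mem_erase.1 hj).1
        exact sub_ne_zero.2 fun h => this (hf h)
      rw [hQev, mul_zero, add_zero] at he
      exact (mul_eq_zero.1 he).resolve_right hpne
    have hsum0 : (∑ ℓ : Fin L, C (x (Sum.inl ℓ)) * ∏ j ∈ univ.erase ℓ, (C (f j) - X)) = 0 := by
      apply Finset.sum_eq_zero
      intro ℓ _
      rw [hxl ℓ, map_zero, zero_mul]
    have hgQ : g * Q = 0 := by
      have := hP0
      rw [hPdef, hsum0, zero_add] at this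
      exact this
    have hg0 : g = 0 := (mul_eq_zero.1 hgQ).resolve_right hQne
    have hxr : ∀ k, x (Sum.inr k) = 0 := by
      intro k
      have hc : g.coeff (k : ℕ) = 0 := by rw [hg0]; simp
      rw [hgdef, Polynomial.finset_sum_coeff] at hc
      simp only [Polynomial.coeff_C_mul, Polynomial.coeff_X_pow] at hc
      rw [Finset.sum_eq_single k] at hc
      · simpa using hc
      · intro k' _ hne
        have hkk : (k : ℕ) ≠ (k' : ℕ) := fun h => hne (Fin.ext h.symm)
        rw [if_neg hkk, mul_zero]
      · intro h; exact absurd (mem_univ k) h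
    apply hx
    funext i
    cases i with
    | inl ℓ => exact hxl ℓ
    | inr k => exact hxr k
  -- degree bound
  have hdeg : P.natDegree < L + 2*B := by
    rw [hPdef]
    apply lt_of_le_of_lt (Polynomial.natDegree_add_le _ _)
    apply max_lt
    · have hbound : ∀ ℓ ∈ (univ : Finset (Fin L)),
          (C (x (Sum.inl ℓ)) * ∏ j ∈ univ.erase ℓ, (C (f j) - X : F[X])).natDegree ≤ L - 1 := by
        intro ℓ _
        apply le_trans (Polynomial.natDegree_mul_le)
        have h1 : (∏ j ∈ univ.erase ℓ, (C (f j) - X : F[X])).natDegree ≤ L - 1 := by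
          refine le_trans (Polynomial.natDegree_prod_le _ _) (le_of_eq ?_)
          simp [hlin, Finset.card_erase_of_mem]
        simp only [Polynomial.natDegree_C, zero_add]
        omega
      exact lt_of_le_of_lt (Polynomial.natDegree_sum_le_of_forall_le _ _ hbound) (by omega)
    · apply lt_of_le_of_lt (Polynomial.natDegree_mul_le)
      have hgdeg : g.natDegree ≤ 2*B - 1 := by
        rw [hgdef]
        apply Polynomial.natDegree_sum_le_of_forall_le
        intro k _
        apply le_trans (Polynomial.natDegree_mul_le)
        simp only [Polynomial.natDegree_C, Polynomial.natDegree_X_pow, zero_add]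
        omega
      have hQdeg : Q.natDegree ≤ L := by
        rw [hQdef]
        refine le_trans (Polynomial.natDegree_prod_le _ _) (le_of_eq ?_)
        simp [hlin]
      omega
  -- counting
  have hZcard : (Finset.univ.filter fun n : Fin (L + 4*B) => csaEnc f α x n = 0).card
      ≤ L + 2*B - 1 := by
    set Z := Finset.univ.filter fun n : Fin (L + 4*B) => csaEnc f α x n = 0 with hZdef
    have himg : Z.image α ⊆ P.roots.toFinset := by
      intro a ha
      obtain ⟨n, hn, rfl⟩ := Finset.mem_image.1 ha
      rw [Multiset.mem_toFinset, Polynomial.mem_roots hPne]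
      have hn0 : csaEnc f α x n = 0 := (Finset.mem_filter.1 hn).2
      show P.eval (α n) = 0
      rw [hkey n, hn0, zero_mul]
    have h1 : Z.card = (Z.image α).card :=
      (Finset.card_image_of_injective Z hα).symm
    have h2 : (Z.image α).card ≤ P.roots.toFinset.card := Finset.card_le_card himg
    have h3 : P.roots.toFinset.card ≤ Multiset.card P.roots := Multiset.toFinset_card_le _
    have h4 : Multiset.card P.roots ≤ P.natDegree := Polynomial.card_roots' P
    omega
  have hsplit := Finset.card_filter_add_card_filter_not
    (s := (univ : Finset (Fin (L + 4*B)))) (p := fun n => csaEnc f α x n = 0)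
  simp only [Finset.card_univ, Fintype.card_fin] at hsplit
  have heq : (Finset.univ.filter fun n : Fin (L + 4*B) => ¬ csaEnc f α x n = 0).card
      = (Finset.univ.filter fun n : Fin (L + 4*B) => csaEnc f α x n ≠ 0).card := rfl
  omega
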